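/- Let 0 < m < 2 and ε be real, and let x, y, z : ℝ → ℝ be differentiable functions satisfying x′ = −m·x − y, y′ = x − z, z′ = ε. Define D(t) = (x(t) − z(t) + m·ε)² + (y(t) + m·(z(t) − m·ε) + ε)². Then there exist ϑ ≥ 0 and φ ∈ ℝ such that for all t ∈ ℝ, D(t) = ϑ²·e^{−m·t}·(1 + (m/2)·cos(√(4 − m²)·t + φ)). In particular, (1 − m/2)·ϑ²·e^{−m·t} ≤ D(t) ≤ (1 + m/2)·ϑ²·e^{−m·t} for all t. -/

import Mathlib

lemma stmt6_unique (m : ℝ) (hm : 0 < m) (f g : ℝ → ℝ)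
    (hf : ∀ t, HasDerivAt f (-m * f t - g t) t)
    (hg : ∀ t, HasDerivAt g (f t) t)
    (hf0 : f 0 = 0) (hg0 : g 0 = 0) :
    ∀ t, f t = 0 ∧ g t = 0 := by
  set h : ℝ → ℝ := fun t => f t ^ 2 + g t ^ 2 with hh_def
  have hh : ∀ t, HasDerivAt h (-(2*m) * f t ^ 2 - 0) t := by
    intro t
    have h1 := ((hf t).pow 2).add ((hg t).pow 2)
    refine h1.congr_deriv ?_
    push_cast
    ring
  have hnn : ∀ t, 0 ≤ h t := fun t => by positivity
  have h0 : h 0 = 0 := by simp [hh_def, hf0, hg0]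
  have hanti : Antitone h := by
    apply antitone_of_deriv_nonpos
    · exact fun t => (hh t).differentiableAt
    · intro t
      rw [(hh t).deriv]
      nlinarith [sq_nonneg (f t)]
  have hzp : ∀ t, 0 ≤ t → h t = 0 := by
    intro t ht
    have := hanti ht
    rw [h0] at this
    exact le_antisymm this (hnn t)
  set H : ℝ → ℝ := fun t => h t * Real.exp (2*m*t) with hH_def
  have hH : ∀ t, HasDerivAt H (Real.exp (2*m*t) * (2*m*(g t)^2)) t := by
    intro t
    have he : HasDerivAt (fun t : ℝ => Real.exp (2*m*t)) (Real.exp (2*m*t) * (2*m*1)) t :=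
      ((hasDerivAt_id t).const_mul (2*m)).exp
    have h2 := (hh t).mul he
    refine h2.congr_deriv ?_
    simp only [hh_def]
    ring
  have hmono : Monotone H :=
    monotone_of_deriv_nonneg (fun t => (hH t).differentiableAt)
      (fun t => by rw [(hH t).deriv]; positivity)
  have hzero : ∀ t, h t = 0 := by
    intro t
    rcases le_or_gt 0 t with h' | h'
    · exact hzp t h'
    · have h3 : H t ≤ H 0 := hmono h'.le
      have h4 : H 0 = 0 := by simp [hH_def, h0]
      rw [h4] at h3
      have h5 : 0 < Real.exp (2*m*t) := Real.exp_pos _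
      simp only [hH_def] at h3
      have h6 : h t ≤ 0 := by
        by_contra hc
        push_neg at hc
        nlinarith [mul_pos hc h5]
      exact le_antisymm h6 (hnn t)
  intro t
  have h7 := hzero t
  simp only [hh_def] at h7
  constructor <;> nlinarith [sq_nonneg (f t), sq_nonneg (g t), h7]

lemma stmt6_alg (m u0 v0 s : ℝ) (hm0 : 0 < m) (hm2 : m < 2)
    (hs2 : s^2 = 4 - m^2) (hs0 : 0 < s) :
    ∃ ϑ φ : ℝ, 0 ≤ ϑ ∧ ∀ t : ℝ,
      (Real.exp (-(m/2)*t) * (u0 * Real.cos (s/2*t) + (-(m/2)*u0 - v0) * (Real.sin (s/2*t)/(s/2))))^2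
        + (Real.exp (-(m/2)*t) * (v0 * Real.cos (s/2*t) + (u0 + (m/2)*v0) * (Real.sin (s/2*t)/(s/2))))^2
      = ϑ ^ 2 * Real.exp (-m * t) * (1 + m / 2 * Real.cos (s * t + φ)) := by
  have h4 : (0:ℝ) < 4 - m^2 := by nlinarith
  obtain ⟨A, hA_def⟩ : ∃ A : ℝ, A = (4*(u0^2+v0^2+m*u0*v0))/(4-m^2) := ⟨_, rfl⟩
  obtain ⟨B, hB_def⟩ : ∃ B : ℝ, B = -((2*m*((m/2)*(u0^2+v0^2)+2*u0*v0))/(4-m^2)) := ⟨_, rfl⟩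
  obtain ⟨C, hC_def⟩ : ∃ C : ℝ, C = (m*(v0^2-u0^2))/s := ⟨_, rfl⟩
  have hA0 : 0 ≤ A := by
    rw [hA_def]
    apply div_nonneg _ h4.le
    nlinarith [sq_nonneg (u0+v0), sq_nonneg (u0-v0), hm0.le, hm2.le]
  have hBC : B^2 + C^2 = ((m/2)*A)^2 := by
    have hCsq : C^2 = (m*(v0^2-u0^2))^2/(4-m^2) := by rw [hC_def, div_pow, hs2]
    rw [hCsq, hA_def, hB_def]
    field_simp
    ring
  refine ⟨Real.sqrt A, Complex.arg ⟨B, -C⟩, Real.sqrt_nonneg A, ?_⟩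
  set φ := Complex.arg ⟨B, -C⟩ with hφ_def
  have habs : ‖(⟨B, -C⟩ : ℂ)‖ = (m/2)*A := by
    rw [Complex.norm_def, Complex.normSq_mk]
    rw [show B*B + -C*-C = ((m/2)*A)^2 by
      rw [← pow_two, neg_mul_neg, ← pow_two]; exact hBC]
    exact Real.sqrt_sq (by positivity)
  have hcosφ : ((m/2)*A) * Real.cos φ = B := by
    rw [← habs, hφ_def, Complex.norm_mul_cos_arg]
  have hsinφ : ((m/2)*A) * Real.sin φ = -C := by
    rw [← habs, hφ_def, Complex.norm_mul_sin_arg]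
  have hϑsq : (Real.sqrt A)^2 = A := Real.sq_sqrt hA0
  intro t
  rw [hϑsq, Real.cos_add]
  have step1 : A * Real.exp (-m * t) *
      (1 + m / 2 * (Real.cos (s*t) * Real.cos φ - Real.sin (s*t) * Real.sin φ)) =
      Real.exp (-m*t) * (A + B * Real.cos (s*t) + C * Real.sin (s*t)) := by
    linear_combination (Real.exp (-m*t) * Real.cos (s*t)) * hcosφ -
      (Real.exp (-m*t) * Real.sin (s*t)) * hsinφ
  rw [step1]
  have hst : s * t = 2 * (s/2 * t) := by ring
  rw [hst, Real.cos_two_mul, Real.sin_two_mul]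
  have hEe : Real.exp (-m * t) = Real.exp (-(m/2)*t) * Real.exp (-(m/2)*t) := by
    rw [← Real.exp_add]; ring_nf
  rw [hEe, hA_def, hB_def, hC_def]
  obtain ⟨c, hc⟩ : ∃ c, Real.cos (s/2*t) = c := ⟨_, rfl⟩
  obtain ⟨si, hsi⟩ : ∃ si, Real.sin (s/2*t) = si := ⟨_, rfl⟩
  obtain ⟨E, hE2⟩ : ∃ E, Real.exp (-(m/2)*t) = E := ⟨_, rfl⟩
  have hpy : si^2 = 1 - c^2 := by rw [← hc, ← hsi]; exact Real.sin_sq _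
  rw [hc, hsi, hE2]
  have hS4 : s^4 = (4-m^2)^2 := by rw [show (4:ℕ) = 2*2 from rfl, pow_mul, hs2]
  have hS3 : s^3 = (4-m^2)*s := by rw [pow_succ, hs2]
  field_simp
  ring_nf
  simp only [hpy, hS4, hS3, hs2]
  ring


set_option maxHeartbeats 2000000 in
/-- the squared distance from a solution of the left-region system to
the canonical attracting slow manifold decays like `ϑ²·e^{-m·t}` modulated by a
bounded oscillatory factor. -/
theorem stmt6 (m ε : ℝ) (hm0 : 0 < m) (hm2 : m < 2)
    (x y z : ℝ → ℝ)
    (hx : ∀ t, HasDerivAt x (-m * x t - y t) t)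
    (hy : ∀ t, HasDerivAt y (x t - z t) t)
    (hz : ∀ t, HasDerivAt z ε t)
    (D : ℝ → ℝ)
    (hD : ∀ t, D t = (x t - z t + m * ε) ^ 2 + (y t + m * (z t - m * ε) + ε) ^ 2) :
    ∃ ϑ φ : ℝ, 0 ≤ ϑ ∧
      (∀ t : ℝ, D t =
        ϑ ^ 2 * Real.exp (-m * t) * (1 + (m / 2) * Real.cos (Real.sqrt (4 - m ^ 2) * t + φ))) ∧
      (∀ t : ℝ,
        (1 - m / 2) * ϑ ^ 2 * Real.exp (-m * t) ≤ D t ∧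
        D t ≤ (1 + m / 2) * ϑ ^ 2 * Real.exp (-m * t)) := by
  have h4 : (0:ℝ) < 4 - m^2 := by nlinarith
  set s := Real.sqrt (4 - m^2) with hs_def
  have hs2 : s^2 = 4 - m^2 := Real.sq_sqrt h4.le
  have hs0 : 0 < s := Real.sqrt_pos.mpr h4
  set ω := s/2 with hω_def
  have hω0 : 0 < ω := by positivity
  set u : ℝ → ℝ := fun t => x t - z t + m*ε with hu_def
  set v : ℝ → ℝ := fun t => y t + m*(z t - m*ε) + ε with hv_def
  have hu' : ∀ t, HasDerivAt u (-m * u t - v t) t := by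
    intro t
    have h1 := ((hx t).sub (hz t)).add_const (m*ε)
    refine h1.congr_deriv ?_
    simp only [hu_def, hv_def]
    ring
  have hv' : ∀ t, HasDerivAt v (u t) t := by
    intro t
    have h1 := ((hy t).add (((hz t).sub_const (m*ε)).const_mul m)).add_const ε
    exact h1
  set u0 := u 0 with hu0_def
  set v0 := v 0 with hv0_def
  set d1 := -(m/2)*u0 - v0 with hd1_def
  set d2 := u0 + (m/2)*v0 with hd2_def
  set U : ℝ → ℝ := fun t => Real.exp (-(m/2)*t) * (u0 * Real.cos (ω*t) + d1 * (Real.sin (ω*t)/ω)) with hU_def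
  set V : ℝ → ℝ := fun t => Real.exp (-(m/2)*t) * (v0 * Real.cos (ω*t) + d2 * (Real.sin (ω*t)/ω)) with hV_def
  have hexp : ∀ t : ℝ, HasDerivAt (fun t : ℝ => Real.exp (-(m/2)*t)) (Real.exp (-(m/2)*t) * (-(m/2)*1)) t :=
    fun t => ((hasDerivAt_id t).const_mul (-(m/2))).exp
  have hcosd : ∀ t : ℝ, HasDerivAt (fun t : ℝ => Real.cos (ω*t)) (-Real.sin (ω*t) * (ω*1)) t :=
    fun t => ((hasDerivAt_id t).const_mul ω).cos
  have hsind : ∀ t : ℝ, HasDerivAt (fun t : ℝ => Real.sin (ω*t)) (Real.cos (ω*t) * (ω*1)) t :=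
    fun t => ((hasDerivAt_id t).const_mul ω).sin
  have hUV : ∀ (a b : ℝ) t, HasDerivAt (fun t => Real.exp (-(m/2)*t) * (a * Real.cos (ω*t) + b * (Real.sin (ω*t)/ω)))
      (Real.exp (-(m/2)*t) * ((-(m/2)*a + b) * Real.cos (ω*t) + (-(m/2)*(b/ω) - a*ω) * Real.sin (ω*t))) t := by
    intro a b t
    have h1 := (hexp t).mul (((hcosd t).const_mul a).add (((hsind t).div_const ω).const_mul b))
    refine h1.congr_deriv ?_
    simp only [Pi.add_apply]
    field_simp
    ring
  have hU' : ∀ t, HasDerivAt U (-m * U t - V t) t := by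
    intro t
    have h1 := hUV u0 d1 t
    refine h1.congr_deriv ?_
    simp only [hU_def, hV_def, hd1_def, hd2_def]
    have hs4 : s^4 = (4-m^2)^2 := by rw [show (4:ℕ) = 2*2 from rfl, pow_mul, hs2]
    have hs3 : s^3 = (4-m^2)*s := by rw [pow_succ, hs2]
    field_simp
    ring_nf
    have hw : ω^2 = (4-m^2)/4 := by rw [hω_def, div_pow, hs2]; norm_num
    have hw3 : ω^3 = (4-m^2)/4*ω := by rw [pow_succ, hw]
    simp only [hw, hw3]
    ring
  have hV' : ∀ t, HasDerivAt V (U t) t := by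
    intro t
    have h1 := hUV v0 d2 t
    refine h1.congr_deriv ?_
    have hs4 : s^4 = (4-m^2)^2 := by rw [show (4:ℕ) = 2*2 from rfl, pow_mul, hs2]
    have hs3 : s^3 = (4-m^2)*s := by rw [pow_succ, hs2]
    simp only [hU_def, hV_def, hd1_def, hd2_def]
    field_simp
    ring_nf
    have hw : ω^2 = (4-m^2)/4 := by rw [hω_def, div_pow, hs2]; norm_num
    have hw3 : ω^3 = (4-m^2)/4*ω := by rw [pow_succ, hw]
    simp only [hw, hw3]
    ring
  have hU0 : U 0 = u0 := by simp [hU_def]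
  have hV0 : V 0 = v0 := by simp [hV_def]
  have key : ∀ t, u t = U t ∧ v t = V t := by
    have hf : ∀ t, HasDerivAt (fun t => u t - U t) (-m * (u t - U t) - (v t - V t)) t := by
      intro t
      have h1 := (hu' t).sub (hU' t)
      refine h1.congr_deriv ?_
      ring
    have hg : ∀ t, HasDerivAt (fun t => v t - V t) (u t - U t) t := by
      intro t
      exact (hv' t).sub (hV' t)
    have h0f : u 0 - U 0 = 0 := by rw [hU0, hu0_def]; ring
    have h0g : v 0 - V 0 = 0 := by rw [hV0, hv0_def]; ring
    intro t
    have := stmt6_unique m hm0 _ _ hf hg h0f h0g t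
    constructor <;> linarith [this.1, this.2]
  obtain ⟨ϑ, φ, hϑ0, hmain⟩ := stmt6_alg m u0 v0 s hm0 hm2 hs2 hs0
  have hDid : ∀ t : ℝ, D t = ϑ ^ 2 * Real.exp (-m * t) * (1 + m / 2 * Real.cos (s * t + φ)) := by
    intro t
    rw [hD t]
    have e1 : x t - z t + m * ε = U t := (key t).1
    have e2 : y t + m * (z t - m * ε) + ε = V t := (key t).2
    rw [e1, e2]
    have := hmain t
    simp only [hU_def, hV_def, hd1_def, hd2_def, hω_def]
    exact this
  refine ⟨ϑ, φ, hϑ0, fun t => hDid t, fun t => ?_⟩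
  have hc1 : -1 ≤ Real.cos (s*t + φ) := Real.neg_one_le_cos _
  have hc2 : Real.cos (s*t + φ) ≤ 1 := Real.cos_le_one _
  have he : (0:ℝ) ≤ Real.exp (-m*t) := (Real.exp_pos _).le
  have hq : (0:ℝ) ≤ ϑ^2 := sq_nonneg ϑ
  have P1 : 0 ≤ ϑ^2 * Real.exp (-m*t) * (m/2 * (1 + Real.cos (s*t + φ))) :=
    mul_nonneg (mul_nonneg hq he) (mul_nonneg (by linarith) (by linarith))
  have P2 : 0 ≤ ϑ^2 * Real.exp (-m*t) * (m/2 * (1 - Real.cos (s*t + φ))) :=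
    mul_nonneg (mul_nonneg hq he) (mul_nonneg (by linarith) (by linarith))
  constructor <;> rw [hDid t] <;> nlinarith [P1, P2]
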